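/- arXiv:2509.20794 — 2 statements merged into one kernel-verified Lean document; each statement's English description precedes it below -/
import Mathlib

section
/- Let C be a linear code of length n over a finite commutative principal ideal ring R, and define I = (I_0, …, I_t) by I_i = {j ∈ {0,…,t} : a_j a_k ≠ 0 for all k such that a_i a_k ≠ 0}. Let A be the (t+1)×(t+1) 0–1 matrix with A_{ij} = 1 iff a_iR ⊆ a_jR (equal to P^I). Then for every positive integer λ, sse^[λ]_C(A Y) = Σ_{Y' ⊆ t·[n]} (B^I_C(Y'))^λ · ∏_{i=0}^t ∏_{ℓ ∈ M_i(Y')} y_{iℓ}, as an identity of polynomials in the variables y_{iℓ}, where the sum runs over all submultisets Y' of t·[n]. -/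
noncomputable section
open scoped BigOperators

/-- The dual of a linear code `C ⊆ Rⁿ` with respect to the standard inner
product `u·v = ∑ ℓ, u ℓ * v ℓ`. -/
def dualCode {R : Type*} [CommRing R] {n : ℕ} (C : Submodule R (Fin n → R)) :
    Submodule R (Fin n → R) where
  carrier := {v | ∀ u ∈ C, ∑ ℓ, u ℓ * v ℓ = 0}
  add_mem' := by
    intro v w hv hw u hu
    simp only [Set.mem_setOf_eq] at *
    have h1 := hv u hu
    have h2 := hw u hu
    simp only [Pi.add_apply, mul_add, Finset.sum_add_distrib, h1, h2, add_zero]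
  zero_mem' := by
    intro u hu
    simp
  smul_mem' := by
    intro c v hv u hu
    simp only [Set.mem_setOf_eq] at *
    have h := hv u hu
    have : ∑ ℓ, u ℓ * (c • v) ℓ = c * ∑ ℓ, u ℓ * v ℓ := by
      rw [Finset.mul_sum]
      exact Finset.sum_congr rfl fun ℓ _ => by
        simp only [Pi.smul_apply, smul_eq_mul]; ring
    rw [this, h, mul_zero]

/-- A finite commutative ring is Frobenius iff `|C|·|C⊥| = |R|ⁿ` for every
linear code `C` of every length `n` over `R`. -/
def IsFrobeniusRing (R : Type*) [CommRing R] [Fintype R] : Prop :=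
  ∀ (n : ℕ) (C : Submodule R (Fin n → R)),
    Nat.card C * Nat.card (dualCode C) = Fintype.card R ^ n

open MvPolynomial Classical

/-- `A^[λ]_C(X)`: the number of `λ`-tuples `(c₁, …, c_λ) ∈ C^λ` such that
`S^[λ]_i(c₁, …, c_λ) = M_i(X)` for all `i`, where
`S^[λ]_i(c₁, …, c_λ) = {ℓ : c_{1ℓ}R + ⋯ + c_{λℓ}R = a_i R}` and the submultiset
`X ⊆ t·[n]` is identified with its multiplicity function `m`. -/
def AL {R : Type*} [CommRing R] {t n : ℕ} (a : Fin (t + 1) → R)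
    (C : Submodule R (Fin n → R)) (lam : ℕ) (m : Fin n → Fin (t + 1)) : ℕ :=
  Nat.card {cs : Fin lam → C // ∀ (i : Fin (t + 1)) (ℓ : Fin n),
    m ℓ = i ↔
      Ideal.span (Set.range fun k => (cs k : Fin n → R) ℓ) = Ideal.span {a i}}

/-- The `λ`-tuple symmetrized support enumerator
`sse^[λ]_C = ∑_{X ⊆ t·[n]} A^[λ]_C(X) ∏ᵢ ∏_{ℓ ∈ M_i(X)} x_{iℓ}`. -/
def sseL {R : Type*} [CommRing R] [Fintype R] {t n : ℕ} (a : Fin (t + 1) → R)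
    (C : Submodule R (Fin n → R)) (lam : ℕ) :
    MvPolynomial (Fin (t + 1) × Fin n) ℚ :=
  ∑ m : Fin n → Fin (t + 1),
    MvPolynomial.C ((AL a C lam m : ℚ)) * ∏ ℓ : Fin n, X (m ℓ, ℓ)

/-- For a tuple `F = (F₀, …, F_t)` of subsets of `{0, …, t}` and a submultiset
`X ⊆ t·[n]` (identified with its multiplicity function `m : [n] → {0, …, t}`),
`B^F_C(X) = |{c ∈ C : S_i(c) ⊆ ∪_{j ∈ F_i} M_j(X) for all i}|`. -/
def BF {R : Type*} [CommRing R] {t n : ℕ} (a : Fin (t + 1) → R)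
    (C : Submodule R (Fin n → R)) (F : Fin (t + 1) → Set (Fin (t + 1)))
    (m : Fin n → Fin (t + 1)) : ℕ :=
  Nat.card {c : C // ∀ (i : Fin (t + 1)) (ℓ : Fin n),
    Ideal.span {(c : Fin n → R) ℓ} = Ideal.span {a i} → m ℓ ∈ F i}


section AnnAux
variable {R : Type*} [CommRing R]

private def annI (x : R) : Ideal R := LinearMap.ker (LinearMap.toSpanSingleton R R x)

private lemma mem_annI {x r : R} : r ∈ annI x ↔ r * x = 0 := by
  simp [annI, LinearMap.mem_ker, LinearMap.toSpanSingleton_apply, smul_eq_mul]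

variable [Fintype R]

private lemma card_annI (x : R) :
    Nat.card (annI x) * Nat.card (Ideal.span {x} : Ideal R) = Nat.card R := by
  have h := Submodule.card_eq_card_quotient_mul_card (annI x)
  have e : Nat.card (R ⧸ annI x) = Nat.card (Ideal.span {x} : Ideal R) := by
    have h1 : (Ideal.span {x} : Ideal R) = LinearMap.range (LinearMap.toSpanSingleton R R x) :=
      LinearMap.span_singleton_eq_range R R x
    rw [h1]
    exact Nat.card_congr (LinearMap.quotKerEquivRange (LinearMap.toSpanSingleton R R x)).toEquiv
  rw [h, e]

variable [IsPrincipalIdealRing R]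

private lemma annI_annI {x z : R} (hz : Ideal.span {z} = annI x) :
    annI z = Ideal.span {x} := by
  have hsub : Ideal.span {x} ≤ annI z := by
    rw [Ideal.span_le, Set.singleton_subset_iff]
    have : z ∈ annI x := hz ▸ Ideal.subset_span rfl
    rw [SetLike.mem_coe, mem_annI]
    rw [mem_annI] at this
    rw [mul_comm]; exact this
  have hc1 := card_annI x
  have hc2 := card_annI z
  rw [← hz] at hc1
  have hpos : 0 < Nat.card (Ideal.span {z} : Ideal R) := Nat.card_pos
  have hcard : Nat.card (annI z) = Nat.card (Ideal.span {x} : Ideal R) := by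
    have := hc2.trans hc1.symm
    rw [mul_comm (Nat.card (Ideal.span ({z} : Set R)))] at this
    exact Nat.eq_of_mul_eq_mul_right hpos this
  have hfin : ((annI z : Set R)).Finite := Set.toFinite _
  have := Set.eq_of_subset_of_ncard_le (t := (annI z : Set R)) (s := (Ideal.span {x} : Ideal R))
    hsub (by rw [← Nat.card_coe_set_eq, ← Nat.card_coe_set_eq]; exact hcard.le) hfin
  exact (SetLike.coe_injective this).symm

private lemma span_le_of_ann_le {x y : R} (h : ∀ r, y * r = 0 → x * r = 0) :
    Ideal.span {x} ≤ Ideal.span {y} := by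
  obtain ⟨z, hz⟩ := (IsPrincipalIdealRing.principal (annI x)).principal
  obtain ⟨w, hw⟩ := (IsPrincipalIdealRing.principal (annI y)).principal
  have hxz : annI z = Ideal.span {x} := annI_annI hz.symm
  have hyw : annI w = Ideal.span {y} := annI_annI hw.symm
  have hannle : annI y ≤ annI x := by
    intro r hr
    rw [mem_annI] at hr ⊢
    rw [mul_comm] at hr ⊢
    exact h r hr
  have hwz : w ∈ Ideal.span {z} := by
    have hmem : w ∈ annI x := hannle (hw ▸ Ideal.subset_span rfl)
    rwa [hz] at hmem
  obtain ⟨u, hu⟩ := Ideal.mem_span_singleton.mp hwz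
  have hzw : annI z ≤ annI w := by
    intro r hr
    rw [mem_annI] at hr ⊢
    rw [hu, show r * (z * u) = r * z * u by ring, hr, zero_mul]
  calc Ideal.span {x} = annI z := hxz.symm
    _ ≤ annI w := hzw
    _ = Ideal.span {y} := hyw

private lemma span_le_iff_forall {t : ℕ} (a : Fin (t + 1) → R)
    (hrep : ∀ r : R, ∃ i, Ideal.span {r} = Ideal.span {a i}) (i j : Fin (t + 1)) :
    Ideal.span {a i} ≤ Ideal.span {a j} ↔ ∀ k, a i * a k ≠ 0 → a j * a k ≠ 0 := by
  constructor
  · intro h k hik hjk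
    obtain ⟨r, hr⟩ := Ideal.mem_span_singleton.mp (h (Ideal.subset_span rfl))
    exact hik (by rw [hr, show a j * r * a k = a j * a k * r by ring, hjk, zero_mul])
  · intro h
    apply span_le_of_ann_le
    intro r hjr
    obtain ⟨k, hk⟩ := hrep r
    have hak : r ∣ a k := by
      apply Ideal.mem_span_singleton.mp
      have h1 : a k ∈ Ideal.span {a k} := Ideal.subset_span rfl
      rwa [← hk] at h1
    obtain ⟨u, hu⟩ := hak
    have hjk : a j * a k = 0 := by rw [hu, ← mul_assoc, hjr, zero_mul]
    have hik : a i * a k = 0 := by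
      by_contra hne
      exact h k hne hjk
    have hrk : a k ∣ r := by
      apply Ideal.mem_span_singleton.mp
      have h1 : r ∈ Ideal.span {r} := Ideal.subset_span rfl
      rwa [hk] at h1
    obtain ⟨v, hv⟩ := hrk
    rw [hv, ← mul_assoc, hik, zero_mul]

end AnnAux

section CountAux
variable {R : Type*} [CommRing R] [Fintype R] [IsPrincipalIdealRing R] {t n : ℕ}

private lemma AL_card (a : Fin (t + 1) → R)
    (hinj : ∀ i j, Ideal.span {a i} = Ideal.span {a j} → i = j)
    (C : Submodule R (Fin n → R)) (lam : ℕ) (m : Fin n → Fin (t + 1)) :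
    AL a C lam m = Nat.card {cs : Fin lam → C // ∀ ℓ : Fin n,
      Ideal.span (Set.range fun k => (cs k : Fin n → R) ℓ) = Ideal.span {a (m ℓ)}} := by
  apply Nat.card_congr (Equiv.subtypeEquivRight _)
  intro cs
  constructor
  · intro h ℓ
    exact (h (m ℓ) ℓ).mp rfl
  · intro h i ℓ
    constructor
    · rintro rfl; exact h ℓ
    · intro e; exact hinj _ _ ((h ℓ).symm.trans e)

private lemma BF_card (a : Fin (t + 1) → R)
    (hrep : ∀ r : R, ∃ i, Ideal.span {r} = Ideal.span {a i})
    (C : Submodule R (Fin n → R)) (I : Fin (t + 1) → Set (Fin (t + 1)))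
    (hIiff : ∀ i j, Ideal.span {a i} ≤ Ideal.span {a j} ↔ j ∈ I i)
    (m' : Fin n → Fin (t + 1)) :
    BF a C I m' = Nat.card {c : C // ∀ ℓ : Fin n,
      (c : Fin n → R) ℓ ∈ Ideal.span {a (m' ℓ)}} := by
  apply Nat.card_congr (Equiv.subtypeEquivRight _)
  intro c
  constructor
  · intro h ℓ
    obtain ⟨i, hi⟩ := hrep ((c : Fin n → R) ℓ)
    have h2 : Ideal.span {a i} ≤ Ideal.span {a (m' ℓ)} := (hIiff i (m' ℓ)).mpr (h i ℓ hi)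
    have h3 : (c : Fin n → R) ℓ ∈ Ideal.span {(c : Fin n → R) ℓ} := Ideal.subset_span rfl
    rw [hi] at h3
    exact h2 h3
  · intro h i ℓ hi
    apply (hIiff i (m' ℓ)).mp
    rw [← hi, Ideal.span_le, Set.singleton_subset_iff]
    exact h ℓ

private lemma count_main (a : Fin (t + 1) → R)
    (hrep : ∀ r : R, ∃ i, Ideal.span {r} = Ideal.span {a i})
    (hinj : ∀ i j, Ideal.span {a i} = Ideal.span {a j} → i = j)
    (C : Submodule R (Fin n → R)) (lam : ℕ) (m' : Fin n → Fin (t + 1)) :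
    ∑ m : Fin n → Fin (t + 1), AL a C lam m *
        (∏ ℓ : Fin n, if Ideal.span {a (m ℓ)} ≤ Ideal.span {a (m' ℓ)} then 1 else 0) =
      Nat.card {cs : Fin lam → C // ∀ (k : Fin lam) (ℓ : Fin n),
        ((cs k : Fin n → R) ℓ) ∈ Ideal.span {a (m' ℓ)}} := by
  classical
  have hex : ∀ (cs : Fin lam → C) (ℓ : Fin n),
      ∃ i, Ideal.span (Set.range fun k => (cs k : Fin n → R) ℓ) = Ideal.span {a i} := by
    intro cs ℓ
    obtain ⟨g, hg⟩ := (IsPrincipalIdealRing.principal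
      (Ideal.span (Set.range fun k => (cs k : Fin n → R) ℓ))).principal
    obtain ⟨i, hi⟩ := hrep g
    exact ⟨i, by rw [hg]; exact hi⟩
  choose τ hτ using hex
  have huniq : ∀ (cs : Fin lam → C) (ℓ : Fin n) (i : Fin (t + 1)),
      Ideal.span (Set.range fun k => (cs k : Fin n → R) ℓ) = Ideal.span {a i} → τ cs ℓ = i :=
    fun cs ℓ i h => hinj _ _ ((hτ cs ℓ).symm.trans h)
  have hgen : ∀ (cs : Fin lam → C) (k : Fin lam) (ℓ : Fin n),
      ((cs k : Fin n → R) ℓ) ∈ Ideal.span (Set.range fun k => (cs k : Fin n → R) ℓ) :=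
    fun cs k ℓ => Ideal.subset_span ⟨k, rfl⟩
  rw [Nat.card_eq_fintype_card, Fintype.card_subtype]
  rw [Finset.card_eq_sum_card_fiberwise
    (f := fun cs : Fin lam → C => fun ℓ => τ cs ℓ) (t := Finset.univ)
    (fun _ _ => Finset.mem_univ _)]
  refine (Finset.sum_congr rfl ?_).symm
  intro m _
  rw [Finset.filter_filter]
  by_cases h : ∀ ℓ, Ideal.span {a (m ℓ)} ≤ Ideal.span {a (m' ℓ)}
  · have hind : (∏ ℓ : Fin n,
        if Ideal.span {a (m ℓ)} ≤ Ideal.span {a (m' ℓ)} then (1 : ℕ) else 0) = 1 := by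
      rw [Finset.prod_eq_one]
      intro ℓ _
      rw [if_pos (h ℓ)]
    rw [hind, mul_one, AL_card a hinj C lam m, Nat.card_eq_fintype_card, Fintype.card_subtype]
    congr 1
    apply Finset.filter_congr
    intro cs _
    constructor
    · rintro ⟨_, hm⟩ ℓ
      rw [hτ cs ℓ, congrFun hm ℓ]
    · intro hsp
      refine ⟨fun k ℓ => ?_, ?_⟩
      · have hm : ((cs k : Fin n → R) ℓ) ∈ Ideal.span {a (m ℓ)} := by
          rw [← hsp ℓ]; exact hgen cs k ℓ
        exact h ℓ hm
      · funext ℓ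
        have e := huniq cs ℓ (m ℓ) (hsp ℓ)
        exact e
  · have hind : (∏ ℓ : Fin n,
        if Ideal.span {a (m ℓ)} ≤ Ideal.span {a (m' ℓ)} then (1 : ℕ) else 0) = 0 := by
      obtain ⟨ℓ₀, hℓ₀⟩ := not_forall.mp h
      exact Finset.prod_eq_zero (Finset.mem_univ ℓ₀) (if_neg hℓ₀)
    rw [hind, mul_zero, Finset.card_eq_zero, Finset.filter_eq_empty_iff]
    rintro cs _ ⟨hP, hm⟩
    apply h
    intro ℓ
    have h1 : Ideal.span (Set.range fun k => (cs k : Fin n → R) ℓ) ≤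
        Ideal.span {a (m' ℓ)} := by
      rw [Ideal.span_le]
      rintro r ⟨k, rfl⟩
      exact hP k ℓ
    rw [hτ cs ℓ, congrFun hm ℓ] at h1
    exact h1

private lemma count_pow (a : Fin (t + 1) → R) (C : Submodule R (Fin n → R)) (lam : ℕ)
    (m' : Fin n → Fin (t + 1)) :
    Nat.card {cs : Fin lam → C // ∀ (k : Fin lam) (ℓ : Fin n),
        ((cs k : Fin n → R) ℓ) ∈ Ideal.span {a (m' ℓ)}} =
      Nat.card {c : C // ∀ ℓ : Fin n, (c : Fin n → R) ℓ ∈ Ideal.span {a (m' ℓ)}} ^ lam := by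
  have e : {cs : Fin lam → C // ∀ (k : Fin lam) (ℓ : Fin n),
      ((cs k : Fin n → R) ℓ) ∈ Ideal.span {a (m' ℓ)}} ≃
      (Fin lam → {c : C // ∀ ℓ : Fin n, (c : Fin n → R) ℓ ∈ Ideal.span {a (m' ℓ)}}) :=
    { toFun := fun x k => ⟨x.1 k, fun ℓ => x.2 k ℓ⟩
      invFun := fun f => ⟨fun k => (f k).1, fun k ℓ => (f k).2 ℓ⟩
      left_inv := fun x => rfl
      right_inv := fun f => rfl }
  rw [Nat.card_congr e, Nat.card_fun, Nat.card_eq_fintype_card (α := Fin lam), Fintype.card_fin]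

end CountAux

/-- over a finite commutative principal ideal ring,
`sse^[λ]_C(A Y) = ∑_{Y' ⊆ t·[n]} (B^I_C(Y'))^λ ∏ᵢ ∏_{ℓ ∈ M_i(Y')} y_{iℓ}`,
where `A = P^I` is the adjacency matrix of the poset of principal ideals. -/
theorem stmt15 {R : Type*} [CommRing R] [Fintype R] [IsPrincipalIdealRing R]
    {t : ℕ} (a : Fin (t + 1) → R)
    (hrep : ∀ r : R, ∃ i, Ideal.span {r} = Ideal.span {a i})
    (hinj : ∀ i j, Ideal.span {a i} = Ideal.span {a j} → i = j)
    {n : ℕ} (C : Submodule R (Fin n → R))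
    (I : Fin (t + 1) → Set (Fin (t + 1)))
    (hI : ∀ i, I i = {j | ∀ k, a i * a k ≠ 0 → a j * a k ≠ 0})
    (A : Matrix (Fin (t + 1)) (Fin (t + 1)) ℚ)
    (hA : ∀ i j, A i j = if Ideal.span {a i} ≤ Ideal.span {a j} then 1 else 0)
    (lam : ℕ) (hlam : 0 < lam) :
    (MvPolynomial.bind₁ (fun p : Fin (t + 1) × Fin n =>
        ∑ j : Fin (t + 1), MvPolynomial.C (A p.1 j) * X (j, p.2))) (sseL a C lam) =
      ∑ m : Fin n → Fin (t + 1),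
        MvPolynomial.C ((BF a C I m : ℚ) ^ lam) * ∏ ℓ : Fin n, X (m ℓ, ℓ) := by
  classical
  have key : ∀ i j, Ideal.span {a i} ≤ Ideal.span {a j} ↔ j ∈ I i := by
    intro i j
    rw [hI i]
    exact (span_le_iff_forall a hrep i j).trans (by rfl)
  have main : ∀ m' : Fin n → Fin (t + 1),
      (∑ m : Fin n → Fin (t + 1), AL a C lam m *
        ∏ ℓ : Fin n, if Ideal.span {a (m ℓ)} ≤ Ideal.span {a (m' ℓ)} then 1 else 0) =
        BF a C I m' ^ lam := by
    intro m'
    rw [count_main a hrep hinj C lam m', count_pow a C lam m',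
      BF_card a hrep C I key m']
  rw [sseL, map_sum]
  have step : ∀ m : Fin n → Fin (t + 1),
      (MvPolynomial.bind₁ (fun p : Fin (t + 1) × Fin n =>
          ∑ j : Fin (t + 1), MvPolynomial.C (A p.1 j) * X (j, p.2)))
        (MvPolynomial.C ((AL a C lam m : ℚ)) * ∏ ℓ : Fin n, X (m ℓ, ℓ)) =
      ∑ m' : Fin n → Fin (t + 1),
        MvPolynomial.C ((AL a C lam m : ℚ) * ∏ ℓ : Fin n, A (m ℓ) (m' ℓ)) *
          ∏ ℓ : Fin n, X (m' ℓ, ℓ) := by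
    intro m
    rw [map_mul, bind₁_C_right, map_prod]
    simp only [bind₁_X_right]
    rw [Finset.prod_univ_sum, Fintype.piFinset_univ, Finset.mul_sum]
    apply Finset.sum_congr rfl
    intro m' _
    rw [Finset.prod_mul_distrib, map_mul, map_prod]
    ring
  rw [Finset.sum_congr rfl fun m _ => step m, Finset.sum_comm]
  apply Finset.sum_congr rfl
  intro m' _
  rw [← Finset.sum_mul, ← map_sum]
  congr 1
  apply congrArg
  have hcast : ∀ m : Fin n → Fin (t + 1), (∏ ℓ : Fin n, A (m ℓ) (m' ℓ)) =
      ((∏ ℓ : Fin n, if Ideal.span {a (m ℓ)} ≤ Ideal.span {a (m' ℓ)} then 1 else 0 : ℕ) : ℚ) := by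
    intro m
    rw [Nat.cast_prod]
    apply Finset.prod_congr rfl
    intro ℓ _
    rw [hA]
    split <;> simp
  calc ∑ m : Fin n → Fin (t + 1), (AL a C lam m : ℚ) * ∏ ℓ : Fin n, A (m ℓ) (m' ℓ)
      = ((∑ m : Fin n → Fin (t + 1), AL a C lam m *
          ∏ ℓ : Fin n, if Ideal.span {a (m ℓ)} ≤ Ideal.span {a (m' ℓ)} then 1 else 0 : ℕ) : ℚ) := by
        rw [Nat.cast_sum]
        exact Finset.sum_congr rfl fun m _ => by rw [hcast m, Nat.cast_mul]
    _ = ((BF a C I m' ^ lam : ℕ) : ℚ) := by rw [main m']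
    _ = (BF a C I m' : ℚ) ^ lam := by push_cast; ring


end
end

section
/- Let C be a linear code of length n over a finite commutative principal ideal ring R, let λ be a positive integer, and define I = (I_0, …, I_t) by I_i = {j ∈ {0,…,t} : a_j a_k ≠ 0 for all k such that a_i a_k ≠ 0}. For submultisets X, Y of t·[n], write X ≤ Y if M_i(X) ⊆ ∪_{j ∈ I_i} M_j(Y) for all i = 0, …, t. Then for every submultiset Y of t·[n], (B^I_C(Y))^λ = Σ_{X ⊆ t·[n], X ≤ Y} A^[λ]_C(X). -/
noncomputable section
open scoped BigOperators

open Classical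

namespace Stmt16Aux

variable {R : Type*} [CommRing R]

lemma mul_eq_zero_congr {x y : R} (h : Ideal.span {x} = Ideal.span {y}) (r : R) :
    x * r = 0 ↔ y * r = 0 := by
  obtain ⟨c, hc⟩ : x ∣ y := Ideal.span_singleton_le_span_singleton.mp h.ge
  obtain ⟨d, hd⟩ : y ∣ x := Ideal.span_singleton_le_span_singleton.mp h.le
  constructor
  · intro hx
    rw [hc, mul_comm x c, mul_assoc, hx, mul_zero]
  · intro hy
    rw [hd, mul_comm y d, mul_assoc, hy, mul_zero]

lemma mul_eq_zero_congr' {x y : R} (h : Ideal.span {x} = Ideal.span {y}) (s : R) :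
    s * x = 0 ↔ s * y = 0 := by
  rw [mul_comm s x, mul_comm s y]; exact mul_eq_zero_congr h s

lemma mul_eq_zero_span_range {ι : Type*} (c : ι → R) {x : R}
    (h : Ideal.span (Set.range c) = Ideal.span {x}) (r : R) :
    x * r = 0 ↔ ∀ k, c k * r = 0 := by
  constructor
  · intro hx k
    obtain ⟨d, hd⟩ : x ∣ c k := by
      rw [← Ideal.span_singleton_le_span_singleton, ← h]
      exact Ideal.span_mono (Set.singleton_subset_iff.mpr ⟨k, rfl⟩)
    rw [hd, mul_comm x d, mul_assoc, hx, mul_zero]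
  · intro hc
    have hx : x ∈ Ideal.span (Set.range c) := by
      rw [h]; exact Ideal.mem_span_singleton_self x
    have hle : Ideal.span (Set.range c) ≤ Submodule.annihilator (Ideal.span {r} : Ideal R) := by
      rw [Ideal.span_le]
      rintro _ ⟨k, rfl⟩
      rw [SetLike.mem_coe, Submodule.mem_annihilator]
      intro m hm
      obtain ⟨d, hd⟩ := Ideal.mem_span_singleton'.mp hm
      rw [← hd, smul_eq_mul, mul_comm d r, ← mul_assoc, hc k, zero_mul]
    have := Submodule.mem_annihilator.mp (hle hx) r (Ideal.mem_span_singleton_self r)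
    simpa using this

variable {t : ℕ} (a : Fin (t + 1) → R)

lemma memI_iff (hrep : ∀ r : R, ∃ i, Ideal.span {r} = Ideal.span {a i}) (I : Fin (t + 1) → Set (Fin (t + 1)))
    (hI : ∀ i, I i = {j | ∀ k, a i * a k ≠ 0 → a j * a k ≠ 0}) (i j : Fin (t + 1)) :
    j ∈ I i ↔ ∀ r : R, a j * r = 0 → a i * r = 0 := by
  rw [hI]
  simp only [Set.mem_setOf_eq]
  constructor
  · intro h r hjr
    obtain ⟨k, hk⟩ := hrep r
    rw [mul_eq_zero_congr' hk] at hjr ⊢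
    by_contra h0
    exact h k h0 hjr
  · intro h k hik hjk
    exact hik (h (a k) hjk)

section PIR
variable [IsPrincipalIdealRing R]

lemma exists_idx (hrep : ∀ r : R, ∃ i, Ideal.span {r} = Ideal.span {a i}) (J : Ideal R) : ∃ i, J = Ideal.span {a i} := by
  obtain ⟨g, hg⟩ := Submodule.IsPrincipal.principal J
  obtain ⟨i, hi⟩ := hrep g
  exact ⟨i, by rw [hg]; exact hi⟩

noncomputable def idxOf (hrep : ∀ r : R, ∃ i, Ideal.span {r} = Ideal.span {a i}) (J : Ideal R) : Fin (t + 1) :=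
  (exists_idx a hrep J).choose

lemma idxOf_spec (hrep : ∀ r : R, ∃ i, Ideal.span {r} = Ideal.span {a i}) (J : Ideal R) : J = Ideal.span {a (idxOf a hrep J)} :=
  (exists_idx a hrep J).choose_spec

lemma core (hrep : ∀ r : R, ∃ i, Ideal.span {r} = Ideal.span {a i}) {lam : ℕ} (cc : Fin lam → R) (I : Fin (t + 1) → Set (Fin (t + 1)))
    (hI : ∀ i, I i = {j | ∀ k, a i * a k ≠ 0 → a j * a k ≠ 0}) (j : Fin (t + 1)) :
    (∀ k, j ∈ I (idxOf a hrep (Ideal.span {cc k}))) ↔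
      j ∈ I (idxOf a hrep (Ideal.span (Set.range cc))) := by
  simp only [memI_iff a hrep I hI]
  have hJ := idxOf_spec a hrep (Ideal.span (Set.range cc))
  have hk : ∀ k, Ideal.span {a (idxOf a hrep (Ideal.span {cc k}))} = Ideal.span {cc k} :=
    fun k => (idxOf_spec a hrep (Ideal.span {cc k})).symm
  constructor
  · intro h r hjr
    rw [mul_eq_zero_span_range cc hJ r]
    intro k
    have := h k r hjr
    rwa [mul_eq_zero_congr (hk k) r] at this
  · intro h k r hjr
    rw [mul_eq_zero_congr (hk k) r]
    have := h r hjr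
    rw [mul_eq_zero_span_range cc hJ r] at this
    exact this k

end PIR
end Stmt16Aux

/-- over a finite commutative principal ideal ring, for every
submultiset `Y` of `t·[n]`,
`(B^I_C(Y))^λ = ∑_{X ≤ Y} A^[λ]_C(X)`, where `X ≤ Y` means
`M_i(X) ⊆ ∪_{j ∈ I_i} M_j(Y)` for all `i`, i.e. `∀ ℓ, Y ℓ ∈ I (X ℓ)`. -/
theorem stmt16 {R : Type*} [CommRing R] [Fintype R] [IsPrincipalIdealRing R]
    {t : ℕ} (a : Fin (t + 1) → R)
    (hrep : ∀ r : R, ∃ i, Ideal.span {r} = Ideal.span {a i})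
    (hinj : ∀ i j, Ideal.span {a i} = Ideal.span {a j} → i = j)
    {n : ℕ} (C : Submodule R (Fin n → R))
    (I : Fin (t + 1) → Set (Fin (t + 1)))
    (hI : ∀ i, I i = {j | ∀ k, a i * a k ≠ 0 → a j * a k ≠ 0})
    (lam : ℕ) (hlam : 0 < lam) :
    ∀ Y : Fin n → Fin (t + 1),
      (BF a C I Y) ^ lam =
        ∑ X ∈ Finset.univ.filter
          (fun X : Fin n → Fin (t + 1) => ∀ ℓ, Y ℓ ∈ I (X ℓ)),
          AL a C lam X := by
  intro Y
  classical
  open Stmt16Aux in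
  haveI : Fintype ↥C := Fintype.ofFinite _
  set Xof : (Fin lam → C) → Fin n → Fin (t + 1) :=
    fun cs ℓ => Stmt16Aux.idxOf a hrep
      (Ideal.span (Set.range fun k => (cs k : Fin n → R) ℓ)) with hXof
  set condB : C → Prop := fun c => ∀ (i : Fin (t + 1)) (ℓ : Fin n),
    Ideal.span {(c : Fin n → R) ℓ} = Ideal.span {a i} → Y ℓ ∈ I i with hcondB
  have hBiff : ∀ c : C, condB c ↔
      ∀ ℓ, Y ℓ ∈ I (Stmt16Aux.idxOf a hrep (Ideal.span {(c : Fin n → R) ℓ})) := by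
    intro c
    constructor
    · intro h ℓ
      exact h _ ℓ (Stmt16Aux.idxOf_spec a hrep _)
    · intro h i ℓ hspan
      have hEq := hinj i _ (hspan.symm.trans (Stmt16Aux.idxOf_spec a hrep _))
      rw [hEq]
      exact h ℓ
  have hALiff : ∀ (X : Fin n → Fin (t + 1)) (cs : Fin lam → C),
      (∀ (i : Fin (t + 1)) (ℓ : Fin n), X ℓ = i ↔
        Ideal.span (Set.range fun k => (cs k : Fin n → R) ℓ) = Ideal.span {a i}) ↔
      Xof cs = X := by
    intro X cs
    constructor
    · intro h
      funext ℓ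
      exact hinj _ _ ((Stmt16Aux.idxOf_spec a hrep _).symm.trans ((h (X ℓ) ℓ).mp rfl))
    · intro h i ℓ
      constructor
      · rintro rfl
        rw [← h]
        exact Stmt16Aux.idxOf_spec a hrep _
      · intro hs
        have hEq := hinj i _ (hs.symm.trans (Stmt16Aux.idxOf_spec a hrep _))
        rw [hEq]
        exact (congrFun h ℓ).symm
  have hkey : ∀ cs : Fin lam → C,
      (∀ k, condB (cs k)) ↔ ∀ ℓ, Y ℓ ∈ I (Xof cs ℓ) := by
    intro cs
    constructor
    · intro h ℓ
      exact (Stmt16Aux.core a hrep (fun k => (cs k : Fin n → R) ℓ) I hI (Y ℓ)).mp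
        (fun k => (hBiff (cs k)).mp (h k) ℓ)
    · intro h k
      rw [hBiff]
      intro ℓ
      exact (Stmt16Aux.core a hrep (fun k => (cs k : Fin n → R) ℓ) I hI (Y ℓ)).mpr (h ℓ) k
  have hAL : ∀ X : Fin n → Fin (t + 1),
      AL a C lam X = (Finset.univ.filter fun cs : Fin lam → C => Xof cs = X).card := by
    intro X
    have h1 : AL a C lam X = Fintype.card {cs : Fin lam → C // ∀ (i : Fin (t + 1)) (ℓ : Fin n),
        X ℓ = i ↔ Ideal.span (Set.range fun k => (cs k : Fin n → R) ℓ) = Ideal.span {a i}} :=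
      Nat.card_eq_fintype_card
    rw [h1, Fintype.card_congr (Equiv.subtypeEquivRight (fun cs => hALiff X cs)),
      Fintype.card_subtype]
  have hBF : BF a C I Y = Fintype.card {c : C // condB c} := Nat.card_eq_fintype_card
  calc (BF a C I Y) ^ lam
      = Fintype.card {c : C // condB c} ^ lam := by rw [hBF]
    _ = Fintype.card (Fin lam → {c : C // condB c}) := by
        rw [Fintype.card_fun, Fintype.card_fin]
    _ = Fintype.card {cs : Fin lam → C // ∀ k, condB (cs k)} :=
        (Fintype.card_congr (Equiv.subtypePiEquivPi (p := fun _ c => condB c))).symm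
    _ = Fintype.card {cs : Fin lam → C // ∀ ℓ, Y ℓ ∈ I (Xof cs ℓ)} :=
        Fintype.card_congr (Equiv.subtypeEquivRight hkey)
    _ = (Finset.univ.filter fun cs : Fin lam → C => ∀ ℓ, Y ℓ ∈ I (Xof cs ℓ)).card :=
        Fintype.card_subtype _
    _ = ∑ X ∈ Finset.univ.filter
          (fun X : Fin n → Fin (t + 1) => ∀ ℓ, Y ℓ ∈ I (X ℓ)),
          ((Finset.univ.filter fun cs : Fin lam → C => ∀ ℓ, Y ℓ ∈ I (Xof cs ℓ)).filter
            fun cs => Xof cs = X).card := by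
        apply Finset.card_eq_sum_card_fiberwise (f := Xof)
        intro cs hcs
        simp only [Finset.mem_coe, Finset.mem_filter, Finset.mem_univ, true_and] at hcs ⊢
        exact hcs
    _ = ∑ X ∈ Finset.univ.filter
          (fun X : Fin n → Fin (t + 1) => ∀ ℓ, Y ℓ ∈ I (X ℓ)),
          AL a C lam X := by
        apply Finset.sum_congr rfl
        intro X hX
        simp only [Finset.mem_filter, Finset.mem_univ, true_and] at hX
        rw [hAL X, Finset.filter_filter]
        congr 1
        apply Finset.filter_congr
        intro cs _
        constructor
        · rintro ⟨_, h2⟩; exact h2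
        · intro h2
          exact ⟨by rw [h2]; exact hX, h2⟩


end
end
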